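/- Renaming a subset of τ-transitions to a fresh visible action and back preserves weakly divergence-preserving branching bisimilarity in the following sense: let G be an LTS over actions A ∪ {τ, ι} with ι ∉ A, ι ≠ τ, and let dec(G) be the LTS with the same states where each ι-transition is relabelled τ and all other transitions are kept. If p and q are weakly divergence-preserving branching bisimilar in G, then p and q are weakly divergence-preserving branching bisimilar in dec(G). -/

import Mathlib

variable {P Act : Type*}

/-- ε-reachability: reflexive-transitive closure of τ-transitions. -/
def Eps (Tr : P → Act → P → Prop) (τ : Act) : P → P → Prop :=
  Relation.ReflTransGen (fun a b => Tr a τ b)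

/-- B is a branching bisimulation. -/
def IsBranchingBisim (Tr : P → Act → P → Prop) (τ : Act) (B : P → P → Prop) : Prop :=
  Symmetric B ∧ ∀ p q α p', B p q → Tr p α p' →
    (α = τ ∧ B p' q) ∨ ∃ q' q'', Eps Tr τ q q' ∧ Tr q' α q'' ∧ B p q' ∧ B p' q''

/-- p is stable: no outgoing τ-transition. -/
def Stable (Tr : P → Act → P → Prop) (τ : Act) (p : P) : Prop :=
  ∀ p', ¬ Tr p τ p'

/-- B is stability-respecting. -/
def StabRespecting (Tr : P → Act → P → Prop) (τ : Act) (B : P → P → Prop) : Prop :=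
  ∀ p q, B p q → Stable Tr τ p →
    ∃ q', Eps Tr τ q q' ∧ Stable Tr τ q' ∧ B p q'

/-- p is divergent: admits an infinite τ-sequence. -/
def Divergent (Tr : P → Act → P → Prop) (τ : Act) (p : P) : Prop :=
  ∃ f : ℕ → P, f 0 = p ∧ ∀ k, Tr (f k) τ (f (k + 1))

/-- Condition (D): B is divergence-preserving. -/
def DivPreserving (Tr : P → Act → P → Prop) (τ : Act) (B : P → P → Prop) : Prop :=
  ∀ p q (f : ℕ → P), B p q → f 0 = p → (∀ k, Tr (f k) τ (f (k + 1))) →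
    (∀ k, B (f k) q) →
    ∃ g : ℕ → P, g 0 = q ∧ (∀ l, Tr (g l) τ (g (l + 1))) ∧ ∀ k l, B (f k) (g l)

/-- B is weakly divergence-preserving. -/
def WeakDivPreserving (Tr : P → Act → P → Prop) (τ : Act) (B : P → P → Prop) : Prop :=
  ∀ p q, B p q → Divergent Tr τ p → Divergent Tr τ q

/-- B is a strong bisimulation. -/
def IsStrongBisim (Tr : P → Act → P → Prop) (B : P → P → Prop) : Prop :=
  Symmetric B ∧ ∀ p q α p', B p q → Tr p α p' → ∃ q', Tr q α q' ∧ B p' q'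

/-- The LTS dec(G): every ι-transition is relabelled to τ; transitions with
labels other than ι are kept. -/
def decTr (Tr : P → Act → P → Prop) (τ ι : Act) (p : P) (α : Act) (q : P) : Prop :=
  (α ≠ ι ∧ Tr p α q) ∨ (α = τ ∧ Tr p ι q)


section Aux

private lemma eps_mono_dec {Tr : P → Act → P → Prop} {τ ι : Act} (hι : ι ≠ τ) {a b : P}
    (h : Eps Tr τ a b) : Eps (decTr Tr τ ι) τ a b :=
  Relation.ReflTransGen.lift (p := fun x y => decTr Tr τ ι x τ y) id (fun _ _ hxy => Or.inl ⟨Ne.symm hι, hxy⟩) _ _ h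

private lemma div_step {D : P → Act → P → Prop} {τ : Act} {a b : P} (h : D a τ b)
    (hd : Divergent D τ b) : Divergent D τ a := by
  obtain ⟨g, hg0, hg⟩ := hd
  refine ⟨fun k => Nat.rec a (fun n _ => g n) k, rfl, ?_⟩
  intro k
  cases k with
  | zero => simpa [hg0] using h
  | succ n => exact hg n

private lemma div_eps {D : P → Act → P → Prop} {τ : Act} {a b : P} (h : Eps D τ a b)
    (hd : Divergent D τ b) : Divergent D τ a := by
  induction h using Relation.ReflTransGen.head_induction_on with
  | refl => exact hd
  | head hstep _ ih => exact div_step hstep ih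

private lemma div_of_progress {D : P → Act → P → Prop} {τ : Act} {Q : P → Prop}
    (h : ∀ x, Q x → ∃ y, Q y ∧ Relation.TransGen (fun a b => D a τ b) x y)
    {q : P} (hq : Q q) : Divergent D τ q := by
  classical
  set R : P → Prop := fun x => ∃ y, Q y ∧ Relation.ReflTransGen (fun a b => D a τ b) x y with hRdef
  have hR : ∀ x, R x → ∃ x', D x τ x' ∧ R x' := by
    rintro x ⟨y, hy, hxy⟩
    rcases Relation.ReflTransGen.cases_head hxy with rfl | ⟨x', hstep, hrest⟩
    · obtain ⟨z, hz, htg⟩ := h x hy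
      obtain ⟨x', hstep, hrest⟩ := Relation.TransGen.head'_iff.mp htg
      exact ⟨x', hstep, z, hz, hrest⟩
    · exact ⟨x', hstep, y, hy, hrest⟩
  choose next hstep hnext using hR
  have hq' : R q := ⟨q, hq, Relation.ReflTransGen.refl⟩
  let g : ℕ → {x : P // R x} := fun n =>
    Nat.rec ⟨q, hq'⟩ (fun _ p => ⟨next p.1 p.2, hnext p.1 p.2⟩) n
  refine ⟨fun n => (g n).1, rfl, fun k => ?_⟩
  exact hstep (g k).1 (g k).2

variable {Tr : P → Act → P → Prop} {τ ι : Act} {B : P → P → Prop}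

/-- Core matching lemma: a `dec`-τ-step from `a` can be matched from `r`. -/
private lemma match_tau (hι : ι ≠ τ) (hB : IsBranchingBisim Tr τ B)
    {a b r : P} (hab : decTr Tr τ ι a τ b) (har : B a r) :
    ∃ r', Eps (decTr Tr τ ι) τ r r' ∧ B b r' ∧
      (Tr a ι b → Relation.TransGen (fun x y => decTr Tr τ ι x τ y) r r') := by
  classical
  by_cases hib : Tr a ι b
  · rcases hB.2 a r ι b har hib with ⟨rfl, _⟩ | ⟨q', q'', heps, hstep, _, hb⟩
    · exact absurd rfl hι
    · have hde : Eps (decTr Tr τ ι) τ r q' := eps_mono_dec hι heps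
      have hds : decTr Tr τ ι q' τ q'' := Or.inr ⟨rfl, hstep⟩
      exact ⟨q'', hde.tail hds, hb, fun _ => Relation.TransGen.tail' hde hds⟩
  · have hab' : Tr a τ b := by
      rcases hab with ⟨_, h⟩ | ⟨_, h⟩
      · exact h
      · exact absurd h hib
    rcases hB.2 a r τ b har hab' with ⟨_, hb⟩ | ⟨q', q'', heps, hstep, _, hb⟩
    · exact ⟨r, Relation.ReflTransGen.refl, hb, fun h => absurd h hib⟩
    · have hde : Eps (decTr Tr τ ι) τ r q' := eps_mono_dec hι heps
      have hds : decTr Tr τ ι q' τ q'' := Or.inl ⟨Ne.symm hι, hstep⟩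
      exact ⟨q'', hde.tail hds, hb, fun h => absurd h hib⟩

/-- Walking along a dec-τ-run while keeping a B-related companion. -/
private lemma reach_along (hι : ι ≠ τ) (hB : IsBranchingBisim Tr τ B) {f : ℕ → P}
    (hf : ∀ k, decTr Tr τ ι (f k) τ (f (k + 1))) (k : ℕ) :
    ∀ m (r : P), B (f k) r → ∃ r', Eps (decTr Tr τ ι) τ r r' ∧ B (f (k + m)) r' := by
  intro m
  induction m with
  | zero => exact fun r hr => ⟨r, Relation.ReflTransGen.refl, hr⟩
  | succ m ih =>
    intro r hr
    obtain ⟨r', heps, hr'⟩ := ih r hr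
    obtain ⟨r'', heps', hr'', -⟩ := match_tau hι hB (hf (k + m)) hr'
    exact ⟨r'', heps.trans heps', hr''⟩

end Aux

/-- renaming ι-transitions to τ preserves weakly
divergence-preserving branching bisimilarity: the relation 'weakly
divergence-preserving branching bisimilar in G' is itself a weakly
divergence-preserving branching bisimulation on dec(G); hence related states
are weakly divergence-preserving branching bisimilar in dec(G). -/
theorem stmt11 (Tr : P → Act → P → Prop) (τ ι : Act) (hι : ι ≠ τ) :
    (IsBranchingBisim (decTr Tr τ ι) τ
        (fun p q => ∃ B, IsBranchingBisim Tr τ B ∧ WeakDivPreserving Tr τ B ∧ B p q) ∧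
      WeakDivPreserving (decTr Tr τ ι) τ
        (fun p q => ∃ B, IsBranchingBisim Tr τ B ∧ WeakDivPreserving Tr τ B ∧ B p q)) ∧
    (∀ p q : P,
      (∃ B, IsBranchingBisim Tr τ B ∧ WeakDivPreserving Tr τ B ∧ B p q) →
      ∃ B, IsBranchingBisim (decTr Tr τ ι) τ B ∧
        WeakDivPreserving (decTr Tr τ ι) τ B ∧ B p q) := by
  classical
  have main : IsBranchingBisim (decTr Tr τ ι) τ
        (fun p q => ∃ B, IsBranchingBisim Tr τ B ∧ WeakDivPreserving Tr τ B ∧ B p q) ∧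
      WeakDivPreserving (decTr Tr τ ι) τ
        (fun p q => ∃ B, IsBranchingBisim Tr τ B ∧ WeakDivPreserving Tr τ B ∧ B p q) := by
    constructor
    · constructor
      · rintro p q ⟨B, hB, hWD, hpq⟩
        exact ⟨B, hB, hWD, hB.1 hpq⟩
      · rintro p q α p' ⟨B, hB, hWD, hpq⟩ hstep
        rcases hstep with ⟨hαι, hTr⟩ | ⟨rfl, hTr⟩
        · rcases hB.2 p q α p' hpq hTr with ⟨rfl, hb⟩ | ⟨q', q'', heps, hs, h1, h2⟩
          · exact Or.inl ⟨rfl, B, hB, hWD, hb⟩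
          · exact Or.inr ⟨q', q'', eps_mono_dec hι heps, Or.inl ⟨hαι, hs⟩,
              ⟨B, hB, hWD, h1⟩, ⟨B, hB, hWD, h2⟩⟩
        · rcases hB.2 p q ι p' hpq hTr with ⟨rfl, _⟩ | ⟨q', q'', heps, hs, h1, h2⟩
          · exact absurd rfl hι
          · exact Or.inr ⟨q', q'', eps_mono_dec hι heps, Or.inr ⟨rfl, hs⟩,
              ⟨B, hB, hWD, h1⟩, ⟨B, hB, hWD, h2⟩⟩
    · rintro p q ⟨B, hB, hWD, hpq⟩ ⟨f, hf0, hf⟩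
      by_cases hcase : ∃ K, ∀ k, Tr (f (K + k)) τ (f (K + k + 1))
      · -- eventually only genuine τ-steps
        obtain ⟨K, hK⟩ := hcase
        have hpq0 : B (f 0) q := hf0 ▸ hpq
        obtain ⟨r, heps, hr⟩ := reach_along hι hB hf 0 K q hpq0
        have hdivG : Divergent Tr τ (f (0 + K)) :=
          ⟨fun k => f (0 + K + k), rfl, fun k => by simpa [Nat.zero_add, Nat.add_assoc] using hK k⟩
        have hdivr : Divergent Tr τ r := hWD _ _ hr hdivG
        obtain ⟨g, hg0, hg⟩ := hdivr
        have : Divergent (decTr Tr τ ι) τ r :=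
          ⟨g, hg0, fun k => Or.inl ⟨Ne.symm hι, hg k⟩⟩
        exact div_eps heps this
      · -- infinitely many ι-steps
        push_neg at hcase
        refine div_of_progress (Q := fun r => ∃ k, B (f k) r) ?_ ⟨0, hf0 ▸ hpq⟩
        rintro r ⟨k, hkr⟩
        obtain ⟨m, hm⟩ := hcase k
        have hι' : Tr (f (k + m)) ι (f (k + m + 1)) := by
          rcases hf (k + m) with ⟨_, h⟩ | ⟨_, h⟩
          · exact absurd h hm
          · exact h
        obtain ⟨r', heps, hr'⟩ := reach_along hι hB hf k m r hkr
        obtain ⟨r'', heps', hr'', htg⟩ := match_tau hι hB (hf (k + m)) hr'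
        exact ⟨r'', ⟨k + m + 1, hr''⟩, Relation.TransGen.trans_right heps (htg hι')⟩
  exact ⟨main, fun p q h => ⟨_, main.1, main.2, h⟩⟩
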